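/- arXiv:1803.04466 — 2 statements merged into one kernel-verified Lean document; each statement's English description precedes it below -/
import Mathlib

section
/- The 3-dimensional hypercube graph Q₃ is a 3-connected planar graph that does not satisfy property C(4,1): there exist four vertices and a fifth vertex z such that no cycle of Q₃ contains all four vertices while avoiding z. -/
/-- `G` is claw-free: no induced `K_{1,3}`. -/
def ClawFree {V : Type*} (G : SimpleGraph V) : Prop :=
  ∀ v a b c : V, G.Adj v a → G.Adj v b → G.Adj v c → a ≠ b → a ≠ c → b ≠ c →
    G.Adj a b ∨ G.Adj a c ∨ G.Adj b c

/-- `G` is 3-connected: at least 4 vertices, and deleting any at most 2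
vertices leaves a connected graph. -/
def ThreeConnected {V : Type*} [Fintype V] (G : SimpleGraph V) : Prop :=
  4 ≤ Fintype.card V ∧
    ∀ X : Finset V, X.card ≤ 2 → (G.induce ((↑X : Set V)ᶜ)).Connected

/-- Property `C(m, n)`: for any disjoint vertex sets `S₁`, `S₂` with
`|S₁| = m`, `|S₂| = n`, there is a cycle containing all of `S₁` and no
vertex of `S₂`. -/
def PropC {V : Type*} [DecidableEq V] (G : SimpleGraph V) (m n : ℕ) : Prop :=
  ∀ S₁ S₂ : Finset V, Disjoint S₁ S₂ → S₁.card = m → S₂.card = n →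
    ∃ (u : V) (c : G.Walk u u), c.IsCycle ∧
      (∀ x ∈ S₁, x ∈ c.support) ∧ (∀ x ∈ S₂, x ∉ c.support)

/-- `G` contains a subdivision (topological minor) of `H`: an injection `f` of
branch vertices and, for each edge of `H`, a path in `G` between the images,
such that distinct paths meet only in shared branch vertices. -/
def ContainsSubdivision {W V : Type*} (H : SimpleGraph W) (G : SimpleGraph V) : Prop :=
  ∃ (f : W → V), Function.Injective f ∧
    ∃ P : ∀ a b : W, H.Adj a b → G.Walk (f a) (f b),
      (∀ a b hab, (P a b hab).IsPath) ∧
      (∀ a b hab, P b a (SimpleGraph.Adj.symm hab) = (P a b hab).reverse) ∧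
      (∀ a b hab (c : W), f c ∈ (P a b hab).support → c = a ∨ c = b) ∧
      (∀ a b hab c d hcd, s(a, b) ≠ s(c, d) → ∀ x,
        x ∈ (P a b hab).support → x ∈ (P c d hcd).support →
          (x = f a ∨ x = f b) ∧ (x = f c ∨ x = f d))

/-- Planarity via Kuratowski's characterization: `G` contains no subdivision
of `K₅` or of `K_{3,3}`. -/
def PlanarGraph {V : Type*} (G : SimpleGraph V) : Prop :=
  ¬ ContainsSubdivision (⊤ : SimpleGraph (Fin 5)) G ∧
  ¬ ContainsSubdivision (completeBipartiteGraph (Fin 3) (Fin 3)) G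

/-- The 3-dimensional hypercube graph `Q₃`. -/
def CubeQ3 : SimpleGraph (Fin 3 → Bool) where
  Adj x y := ∃! i, x i ≠ y i
  symm := by
    constructor
    rintro x y ⟨i, hi, hu⟩
    exact ⟨i, Ne.symm hi, fun j hj => hu j (Ne.symm hj)⟩
  loopless := by constructor; rintro x ⟨i, hi, _⟩; exact hi rfl


instance : DecidableRel CubeQ3.Adj := fun x y =>
  inferInstanceAs (Decidable (∃ i, x i ≠ y i ∧ ∀ j, x j ≠ y j → j = i))

open SimpleGraph

def nbhdClosure {V : Type*} [Fintype V] [DecidableEq V] (G : SimpleGraph V) [DecidableRel G.Adj]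
    (S : Finset V) : ℕ → Finset V
  | 0 => S
  | n+1 => nbhdClosure G S n ∪
      Finset.univ.filter (fun v => ∃ u ∈ nbhdClosure G S n, G.Adj u v)

lemma reachable_of_mem_nbhdClosure {V : Type*} [Fintype V] [DecidableEq V]
    (G : SimpleGraph V) [DecidableRel G.Adj] (v₀ : V) (n : ℕ) :
    ∀ w ∈ nbhdClosure G {v₀} n, G.Reachable v₀ w := by
  induction n with
  | zero => intro w hw; simp [nbhdClosure] at hw; exact hw ▸ SimpleGraph.Reachable.refl _
  | succ n ih =>
    intro w hw
    simp only [nbhdClosure, Finset.mem_union, Finset.mem_filter] at hw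
    rcases hw with hw | ⟨-, u, hu, hadj⟩
    · exact ih w hw
    · exact (ih u hu).trans hadj.reachable

lemma connected_of_closure {V : Type*} [Fintype V] [DecidableEq V]
    (G : SimpleGraph V) [DecidableRel G.Adj] (n : ℕ)
    (h : ∃ v : V, ∀ w : V, w ∈ nbhdClosure G {v} n) : G.Connected := by
  obtain ⟨v, hv⟩ := h
  rw [SimpleGraph.connected_iff]
  exact ⟨fun a b => (reachable_of_mem_nbhdClosure G v n a (hv a)).symm.trans
    (reachable_of_mem_nbhdClosure G v n b (hv b)), ⟨v⟩⟩



def qpar (x : Fin 3 → Bool) : Bool := xor (x 0) (xor (x 1) (x 2))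

lemma adj_qpar' : ∀ x y, CubeQ3.Adj x y → qpar x = !qpar y := by decide

lemma getVert_mem_support {V : Type*} {G : SimpleGraph V} :
    ∀ {u v : V} (w : G.Walk u v) (i : ℕ), w.getVert i ∈ w.support := by
  intro u v w
  induction w with
  | nil => intro i; simp [SimpleGraph.Walk.getVert]
  | cons h w ih =>
    intro i
    cases i with
    | zero => simp [SimpleGraph.Walk.getVert_zero]
    | succ n =>
      rw [SimpleGraph.Walk.getVert_cons_succ, SimpleGraph.Walk.support_cons]
      exact List.mem_cons_of_mem _ (ih n)

lemma getVert_injOn_path {V : Type*} {G : SimpleGraph V} :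
    ∀ {u v : V} (w : G.Walk u v), w.IsPath → ∀ i j, i ≤ w.length → j ≤ w.length →
      w.getVert i = w.getVert j → i = j := by
  intro u v w
  induction w with
  | nil => intro _ i j hi hj _; simp [SimpleGraph.Walk.length_nil] at hi hj; omega
  | @cons u x v h w ih =>
    intro hp i j hi hj hij
    rw [SimpleGraph.Walk.cons_isPath_iff] at hp
    rw [SimpleGraph.Walk.length_cons] at hi hj
    match i, j with
    | 0, 0 => rfl
    | 0, j+1 =>
      rw [SimpleGraph.Walk.getVert_zero, SimpleGraph.Walk.getVert_cons_succ] at hij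
      exact absurd (hij ▸ getVert_mem_support w j) hp.2
    | i+1, 0 =>
      rw [SimpleGraph.Walk.getVert_zero, SimpleGraph.Walk.getVert_cons_succ] at hij
      exact absurd (hij ▸ getVert_mem_support w i) hp.2
    | i+1, j+1 =>
      rw [SimpleGraph.Walk.getVert_cons_succ, SimpleGraph.Walk.getVert_cons_succ] at hij
      have := ih hp.1 i j (by omega) (by omega) hij
      omega

lemma walk_pos_length {V : Type*} {G : SimpleGraph V} {u v : V} (w : G.Walk u v)
    (h : u ≠ v) : 0 < w.length := by
  rcases Nat.eq_zero_or_pos w.length with h0 | h0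
  · exact absurd (SimpleGraph.Walk.eq_of_length_eq_zero h0) h
  · exact h0

lemma walk_parity : ∀ {u v : Fin 3 → Bool} (w : CubeQ3.Walk u v),
    (qpar u = qpar v ↔ Even w.length) := by
  intro u v w
  induction w with
  | nil => simp
  | @cons u x v hadj w ih =>
    have hflip := adj_qpar' u x hadj
    rw [SimpleGraph.Walk.length_cons, Nat.even_add_one, ← ih]
    cases h1 : qpar x <;> cases h2 : qpar u <;> cases h3 : qpar v <;> simp_all

lemma parity_count : ∀ g : Fin 3 ⊕ Fin 3 → Bool,
    ¬ ((Finset.univ.filter (fun e : Fin 3 × Fin 3 =>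
      g (Sum.inl e.1) = g (Sum.inr e.2))).card = 1 ∨
      (Finset.univ.filter (fun e : Fin 3 × Fin 3 =>
      g (Sum.inl e.1) = g (Sum.inr e.2))).card = 2) := by decide

lemma common_nbrs : ∀ u v : Fin 3 → Bool, u ≠ v →
    (CubeQ3.neighborFinset u ∩ CubeQ3.neighborFinset v).card ≤ 2 := by decide

lemma noK33 : ¬ ContainsSubdivision (completeBipartiteGraph (Fin 3) (Fin 3)) CubeQ3 := by
  rintro ⟨f, hf, P, hpath, hrev, hbranch, hdisj⟩
  have hadj : ∀ a b : Fin 3,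
      (completeBipartiteGraph (Fin 3) (Fin 3)).Adj (Sum.inl a) (Sum.inr b) := by
    intro a b; simp [completeBipartiteGraph]
  set ℓ : Fin 3 × Fin 3 → ℕ :=
    fun e => (P (Sum.inl e.1) (Sum.inr e.2) (hadj e.1 e.2)).length with hℓ
  have hlpos : ∀ e, 1 ≤ ℓ e :=
    fun e => walk_pos_length _ (fun he => Sum.inl_ne_inr (hf he))
  set J : Fin 3 × Fin 3 → Finset (Fin 3 → Bool) := fun e =>
    (Finset.Ico 1 (ℓ e)).image (P (Sum.inl e.1) (Sum.inr e.2) (hadj e.1 e.2)).getVert with hJ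
  have hJcard : ∀ e, (J e).card = ℓ e - 1 := by
    intro e
    have hlen : (P (Sum.inl e.1) (Sum.inr e.2) (hadj e.1 e.2)).length = ℓ e := by rw [hℓ]
    rw [hJ, Finset.card_image_of_injOn, Nat.card_Ico]
    intro i hi j hj hij
    rw [Finset.coe_Ico, Set.mem_Ico] at hi hj
    exact getVert_injOn_path _ (hpath _ _ _) i j (by omega) (by omega) hij
  have hJnonb : ∀ e z, z ∈ J e → ∀ c, f c ≠ z := by
    intro e z hz c hc
    have hlen : (P (Sum.inl e.1) (Sum.inr e.2) (hadj e.1 e.2)).length = ℓ e := by rw [hℓ]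
    simp only [hJ, Finset.mem_image, Finset.mem_Ico] at hz
    obtain ⟨i, ⟨hi1, hi2⟩, rfl⟩ := hz
    have hmem := getVert_mem_support (P _ _ (hadj e.1 e.2)) i
    rcases hbranch _ _ (hadj e.1 e.2) c (by rw [hc]; exact hmem) with rfl | rfl
    · have h0 : (P _ _ (hadj e.1 e.2)).getVert i = (P _ _ (hadj e.1 e.2)).getVert 0 := by
        rw [SimpleGraph.Walk.getVert_zero]; exact hc.symm
      have := getVert_injOn_path _ (hpath _ _ _) i 0 (by omega) (by omega) h0
      omega
    · have h0 : (P _ _ (hadj e.1 e.2)).getVert i = (P _ _ (hadj e.1 e.2)).getVert (ℓ e) := by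
        rw [hℓ, SimpleGraph.Walk.getVert_length]; exact hc.symm
      have := getVert_injOn_path _ (hpath _ _ _) i (ℓ e) (by omega) (by omega) h0
      omega
  have hJsupp : ∀ e z, z ∈ J e → z ∈ (P (Sum.inl e.1) (Sum.inr e.2) (hadj e.1 e.2)).support := by
    intro e z hz
    simp only [hJ, Finset.mem_image] at hz
    obtain ⟨i, -, rfl⟩ := hz
    exact getVert_mem_support _ i
  have hJdisj : ∀ e e' : Fin 3 × Fin 3, e ≠ e' → Disjoint (J e) (J e') := by
    intro e e' hee
    rw [Finset.disjoint_left]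
    intro z hz hz'
    have hs : s(Sum.inl e.1, Sum.inr e.2) ≠
        s((Sum.inl e'.1 : Fin 3 ⊕ Fin 3), Sum.inr e'.2) := by
      intro hss
      rw [Sym2.eq_iff] at hss
      rcases hss with ⟨h1, h2⟩ | ⟨h1, -⟩
      · exact hee (Prod.ext (Sum.inl.inj h1) (Sum.inr.inj h2))
      · exact Sum.inl_ne_inr h1
    have := hdisj _ _ (hadj e.1 e.2) _ _ (hadj e'.1 e'.2) hs z (hJsupp e z hz) (hJsupp e' z hz')
    rcases this.1 with h | h <;> exact hJnonb e z hz _ h.symm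
  have hsum : ∑ e : Fin 3 × Fin 3, (ℓ e - 1) ≤ 2 := by
    have hbu : (Finset.univ.biUnion J).card = ∑ e, (J e).card :=
      Finset.card_biUnion (fun e _ e' _ h => hJdisj e e' h)
    have hsub : Finset.univ.biUnion J ⊆ ((Finset.univ.image f)ᶜ : Finset (Fin 3 → Bool)) := by
      refine Finset.biUnion_subset.mpr (fun e _ => ?_)
      intro z hz
      rw [Finset.mem_compl]
      intro hzi
      obtain ⟨c, -, hc⟩ := Finset.mem_image.mp hzi
      exact hJnonb e z hz c hc
    have hIc : ((Finset.univ.image f)ᶜ : Finset (Fin 3 → Bool)).card = 2 := by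
      rw [Finset.card_compl, Finset.card_image_of_injective _ hf]
      simp
    calc ∑ e : Fin 3 × Fin 3, (ℓ e - 1) = ∑ e, (J e).card := by
          exact Finset.sum_congr rfl (fun e _ => (hJcard e).symm)
      _ = (Finset.univ.biUnion J).card := hbu.symm
      _ ≤ 2 := hIc ▸ Finset.card_le_card hsub
  have hpar : ∀ e : Fin 3 × Fin 3,
      (qpar (f (Sum.inl e.1)) = qpar (f (Sum.inr e.2)) ↔ Even (ℓ e)) :=
    fun e => walk_parity _
  set Feq : Finset (Fin 3 × Fin 3) := Finset.univ.filter (fun e : Fin 3 × Fin 3 =>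
      qpar (f (Sum.inl e.1)) = qpar (f (Sum.inr e.2))) with hFeq
  have hFle : Feq.card ≤ 2 := by
    have h1 : ∀ e ∈ Feq, 1 ≤ ℓ e - 1 := by
      intro e he
      rw [hFeq, Finset.mem_filter] at he
      have hev := (hpar e).mp he.2
      rw [Nat.even_iff] at hev
      have := hlpos e
      omega
    calc Feq.card = ∑ _e ∈ Feq, 1 := (Finset.card_eq_sum_ones _)
      _ ≤ ∑ e ∈ Feq, (ℓ e - 1) := Finset.sum_le_sum h1
      _ ≤ ∑ e : Fin 3 × Fin 3, (ℓ e - 1) :=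
          Finset.sum_le_sum_of_subset (Finset.subset_univ _)
      _ ≤ 2 := hsum
  have hF0 : Feq.card = 0 := by
    have h2 : ¬(Feq.card = 1 ∨ Feq.card = 2) := by
      simpa [hFeq] using parity_count (fun w => qpar (f w))
    rw [not_or] at h2
    omega
  have hodd : ∀ e : Fin 3 × Fin 3, ℓ e % 2 = 1 := by
    intro e
    rw [Finset.card_eq_zero] at hF0
    have hne : ¬ (qpar (f (Sum.inl e.1)) = qpar (f (Sum.inr e.2))) := by
      intro h
      have : e ∈ Feq := by rw [hFeq, Finset.mem_filter]; exact ⟨Finset.mem_univ e, h⟩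
      rw [hF0] at this
      exact absurd this (Finset.notMem_empty e)
    have hnev : ¬ Even (ℓ e) := fun hev => hne ((hpar e).mpr hev)
    rw [Nat.even_iff] at hnev
    omega
  have hshort : ∀ e : Fin 3 × Fin 3, ℓ e = 1 →
      CubeQ3.Adj (f (Sum.inl e.1)) (f (Sum.inr e.2)) := by
    intro e he
    have hlen : (P (Sum.inl e.1) (Sum.inr e.2) (hadj e.1 e.2)).length = ℓ e := by rw [hℓ]
    have h0 := (P _ _ (hadj e.1 e.2)).adj_getVert_succ (i := 0) (by omega)
    rw [SimpleGraph.Walk.getVert_zero] at h0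
    have h1 : (P (Sum.inl e.1) (Sum.inr e.2) (hadj e.1 e.2)).getVert 1 = f (Sum.inr e.2) := by
      have h1l : (1 : ℕ) = (P (Sum.inl e.1) (Sum.inr e.2) (hadj e.1 e.2)).length := by omega
      rw [h1l, SimpleGraph.Walk.getVert_length]
    rw [h1] at h0
    exact h0
  have CN : ∀ a₁ a₂ : Fin 3, a₁ ≠ a₂ → (∀ b, ℓ (a₁, b) = 1) → (∀ b, ℓ (a₂, b) = 1) → False := by
    intro a₁ a₂ hne h1 h2
    have hsub : (Finset.univ.image (fun b => f (Sum.inr b))) ⊆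
        CubeQ3.neighborFinset (f (Sum.inl a₁)) ∩ CubeQ3.neighborFinset (f (Sum.inl a₂)) := by
      intro z hz
      obtain ⟨b, -, rfl⟩ := Finset.mem_image.mp hz
      rw [Finset.mem_inter, SimpleGraph.mem_neighborFinset, SimpleGraph.mem_neighborFinset]
      exact ⟨hshort (a₁, b) (h1 b), hshort (a₂, b) (h2 b)⟩
    have hc3 : (Finset.univ.image (fun b : Fin 3 => f (Sum.inr b))).card = 3 := by
      rw [Finset.card_image_of_injective _ (fun b b' h => Sum.inr.inj (hf h))]
      simp
    have hcc := Finset.card_le_card hsub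
    have hle := common_nbrs _ _ (fun h => hne (Sum.inl.inj (hf h)))
    omega
  have hlong_unique : ∀ e e' : Fin 3 × Fin 3, 2 ≤ ℓ e → 2 ≤ ℓ e' → e = e' := by
    intro e e' he he'
    by_contra hne
    have h1 := hodd e
    have h2 := hodd e'
    have hpair : (ℓ e - 1) + (ℓ e' - 1) ≤ ∑ x : Fin 3 × Fin 3, (ℓ x - 1) := by
      have hsp := Finset.sum_pair (f := fun x => ℓ x - 1) hne
      rw [← hsp]
      exact Finset.sum_le_sum_of_subset (Finset.subset_univ _)
    omega
  by_cases hex : ∃ e₀ : Fin 3 × Fin 3, 2 ≤ ℓ e₀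
  · obtain ⟨e₀, he₀⟩ := hex
    obtain ⟨a₁, a₂, h12, h10, h20⟩ : ∃ a₁ a₂ : Fin 3, a₁ ≠ a₂ ∧ a₁ ≠ e₀.1 ∧ a₂ ≠ e₀.1 := by
      have : ∀ a₀ : Fin 3, ∃ a₁ a₂ : Fin 3, a₁ ≠ a₂ ∧ a₁ ≠ a₀ ∧ a₂ ≠ a₀ := by decide
      exact this e₀.1
    refine CN a₁ a₂ h12 (fun b => ?_) (fun b => ?_)
    · rcases Nat.lt_or_ge (ℓ (a₁, b)) 2 with h | h
      · have := hlpos (a₁, b); omega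
      · exact absurd (congrArg Prod.fst (hlong_unique _ _ h he₀)) h10
    · rcases Nat.lt_or_ge (ℓ (a₂, b)) 2 with h | h
      · have := hlpos (a₂, b); omega
      · exact absurd (congrArg Prod.fst (hlong_unique _ _ h he₀)) h20
  · push_neg at hex
    exact CN 0 1 (by decide)
      (fun b => by have := hlpos (0, b); have := hex (0, b); omega)
      (fun b => by have := hlpos (1, b); have := hex (1, b); omega)

lemma deg3 : ∀ v : Fin 3 → Bool, (CubeQ3.neighborFinset v).card = 3 := by decide

lemma noK5 : ¬ ContainsSubdivision (⊤ : SimpleGraph (Fin 5)) CubeQ3 := by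
  rintro ⟨f, hf, P, hpath, hrev, hbranch, hdisj⟩
  have htop : ∀ b : Fin 5, b ≠ 0 → (⊤ : SimpleGraph (Fin 5)).Adj 0 b :=
    fun b hb => by simp [Ne.symm hb]
  set g : Fin 5 → (Fin 3 → Bool) := fun b =>
    if h : (⊤ : SimpleGraph (Fin 5)).Adj 0 b then (P 0 b h).getVert 1 else f 0 with hg
  have hglen : ∀ b (h : (⊤ : SimpleGraph (Fin 5)).Adj 0 b), 0 < (P 0 b h).length :=
    fun b h => walk_pos_length _ (fun he => h.ne (hf he))
  have hgadj : ∀ b, b ≠ 0 → CubeQ3.Adj (f 0) (g b) := by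
    intro b hb
    have h := htop b hb
    have := (P 0 b h).adj_getVert_succ (i := 0) (hglen b h)
    rw [SimpleGraph.Walk.getVert_zero] at this
    simp only [hg, dif_pos h]
    exact this
  have hgmem : ∀ b (h : (⊤ : SimpleGraph (Fin 5)).Adj 0 b), g b ∈ (P 0 b h).support := by
    intro b h
    simp only [hg, dif_pos h]
    exact getVert_mem_support _ 1
  have hginj : ∀ b b' : Fin 5, b ≠ 0 → b' ≠ 0 → b ≠ b' → g b ≠ g b' := by
    intro b b' hb hb' hbb' he
    have h := htop b hb
    have h' := htop b' hb'
    have hs : s((0 : Fin 5), b) ≠ s((0 : Fin 5), b') := by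
      intro hss
      rw [Sym2.eq_iff] at hss
      rcases hss with ⟨-, h1⟩ | ⟨h1, -⟩
      · exact hbb' h1
      · exact hb' h1.symm
    have := hdisj 0 b h 0 b' h' hs (g b) (hgmem b h) (he ▸ hgmem b' h')
    have hne0 : g b ≠ f 0 := fun hh => CubeQ3.irrefl (hh ▸ (hgadj b hb))
    rcases this with ⟨hb1 | hb1, hb2 | hb2⟩
    · exact hne0 hb1
    · exact hne0 hb1
    · exact hne0 hb2
    · exact hbb' (hf (hb1.symm.trans hb2))
  -- four distinct neighbors of f 0
  have hsub : ({1, 2, 3, 4} : Finset (Fin 5)).image g ⊆ CubeQ3.neighborFinset (f 0) := by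
    intro z hz
    simp only [Finset.mem_image] at hz
    obtain ⟨b, hb, rfl⟩ := hz
    rw [SimpleGraph.mem_neighborFinset]
    exact hgadj b (by fin_cases hb <;> decide)
  have hcard : (({1, 2, 3, 4} : Finset (Fin 5)).image g).card = 4 := by
    rw [Finset.card_image_of_injOn]
    · decide
    · intro b hb b' hb' he
      by_contra hne
      rw [Finset.mem_coe] at hb hb'
      simp only [Finset.mem_insert, Finset.mem_singleton] at hb hb'
      have hb0 : b ≠ 0 := by rcases hb with rfl|rfl|rfl|rfl <;> decide
      have hb0' : b' ≠ 0 := by rcases hb' with rfl|rfl|rfl|rfl <;> decide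
      exact hginj b b' hb0 hb0' hne he
  have := Finset.card_le_card hsub
  rw [hcard, deg3] at this
  omega

lemma adj_qpar : ∀ x y, CubeQ3.Adj x y → ∀ q : Bool,
    (xor (qpar x) q) = !(xor (qpar y) q) := by decide

lemma countP_parity (q : Bool) :
    ∀ {u v : Fin 3 → Bool} (w : CubeQ3.Walk u v),
    2 * w.support.countP (fun x => xor (qpar x) q) =
      w.length + (if xor (qpar u) q then 1 else 0) + (if xor (qpar v) q then 1 else 0) := by
  intro u v w
  induction w with
  | nil => simp only [SimpleGraph.Walk.support_nil, SimpleGraph.Walk.length_nil,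
      List.countP_cons, List.countP_nil]; cases h : xor (qpar _) q <;> simp [h]
  | @cons u x v hadj w ih =>
    have hflip := adj_qpar u x hadj q
    simp only [SimpleGraph.Walk.support_cons, SimpleGraph.Walk.length_cons, List.countP_cons]
    cases hx : xor (qpar x) q <;> cases hu : xor (qpar u) q <;>
      simp_all <;> omega

lemma cycle_balance {u : Fin 3 → Bool} (c : CubeQ3.Walk u u) (hc : c.IsCycle) :
    c.support.tail.countP (fun x => qpar x) = c.support.tail.countP (fun x => !qpar x) := by
  cases c with
  | nil => exact absurd rfl hc.ne_nil
  | cons hadj w =>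
    rename_i x
    have h1 := countP_parity false w
    have h2 := countP_parity true w
    have hflip := adj_qpar u x hadj false
    simp only [SimpleGraph.Walk.support_cons, List.tail_cons]
    have e1 : ∀ z : Fin 3 → Bool, (xor (qpar z) false) = qpar z := by decide
    have e2 : ∀ z : Fin 3 → Bool, (xor (qpar z) true) = !qpar z := by decide
    simp only [e1] at h1 hflip
    simp only [e2] at h2
    cases hx : qpar x <;> cases hu : qpar u <;> simp_all <;> omega

def oddVerts : Finset (Fin 3 → Bool) :=
  {![true, false, false], ![false, true, false], ![false, false, true], ![true, true, true]}

lemma no_C41 : ¬ (∀ S₁ S₂ : Finset (Fin 3 → Bool), Disjoint S₁ S₂ → S₁.card = 4 → S₂.card = 1 →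
    ∃ (u : _) (c : CubeQ3.Walk u u), c.IsCycle ∧
      (∀ x ∈ S₁, x ∈ c.support) ∧ (∀ x ∈ S₂, x ∉ c.support)) := by
  intro h
  obtain ⟨u, c, hc, hin, hout⟩ := h oddVerts {![false, false, false]}
    (by decide) (by decide) (by decide)
  -- the support tail
  have hbal := cycle_balance c hc
  have hnd : c.support.tail.Nodup := hc.support_nodup
  set l := c.support.tail with hl
  have hmem : ∀ z ∈ oddVerts, z ∈ l := by
    intro z hz
    have hz' := hin z hz
    cases c with
    | nil => exact absurd rfl hc.ne_nil
    | cons hadj w =>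
      simp only [SimpleGraph.Walk.support_cons, List.tail_cons] at hl ⊢
      rw [SimpleGraph.Walk.support_cons, List.mem_cons] at hz'
      rw [hl]
      rcases hz' with rfl | hz' 
      · exact w.end_mem_support
      · exact hz'
  -- lower bound
  have hlow : 4 ≤ l.countP (fun x => qpar x) := by
    rw [List.countP_eq_length_filter]
    have hndf : (l.filter (fun x => qpar x)).Nodup := hnd.filter _
    have hsub : oddVerts ⊆ (l.filter (fun x => qpar x)).toFinset := by
      intro z hz
      rw [List.mem_toFinset, List.mem_filter]
      refine ⟨hmem z hz, ?_⟩
      fin_cases hz <;> decide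
    calc 4 = oddVerts.card := by decide
      _ ≤ (l.filter (fun x => qpar x)).toFinset.card := Finset.card_le_card hsub
      _ = (l.filter (fun x => qpar x)).length := by
          rw [List.toFinset_card_of_nodup hndf]
  have hhigh : l.countP (fun x => !qpar x) ≤ 3 := by
    rw [List.countP_eq_length_filter]
    have hndf : (l.filter (fun x => !qpar x)).Nodup := hnd.filter _
    have hsub : (l.filter (fun x => !qpar x)).toFinset ⊆
        ({![false, true, true], ![true, false, true], ![true, true, false]} :
          Finset (Fin 3 → Bool)) := by
      intro z hz
      rw [List.mem_toFinset, List.mem_filter] at hz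
      obtain ⟨hzl, hzp⟩ := hz
      have hzs : z ∈ c.support := by
        rw [hl] at hzl; exact List.mem_of_mem_tail hzl
      have hz0 : z ≠ ![false, false, false] := by
        intro h0; exact hout _ (by decide) (h0 ▸ hzs)
      have key : ∀ z : Fin 3 → Bool, (!qpar z) = true → z ≠ ![false, false, false] →
          z ∈ ({![false, true, true], ![true, false, true], ![true, true, false]} :
            Finset (Fin 3 → Bool)) := by decide
      exact key z hzp hz0
    calc (l.filter (fun x => !qpar x)).length
        = (l.filter (fun x => !qpar x)).toFinset.card := (List.toFinset_card_of_nodup hndf).symm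
      _ ≤ 3 := by
          have := Finset.card_le_card hsub
          simpa using this
  omega


set_option maxHeartbeats 4000000 in
set_option maxRecDepth 10000 in
/-- `Q₃` is a 3-connected planar graph that does not satisfy `C(4,1)`. -/
theorem Q3_not_C41 :
    ThreeConnected CubeQ3 ∧ PlanarGraph CubeQ3 ∧ ¬ PropC CubeQ3 4 1 := by
  refine ⟨⟨by decide, ?_⟩, ⟨noK5, noK33⟩, no_C41⟩
  intro X hX
  apply connected_of_closure _ 5
  revert hX; revert X
  decide
end

section
/- If a graph G satisfies property C(3,1), then G is 3-connected. -/
/-- `G` has a cycle whose vertex set contains `S` and avoids every vertex of `A`. -/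
def CycleThrough {V : Type*} (G : SimpleGraph V) (S A : Set V) : Prop :=
  ∃ (u : V) (c : G.Walk u u), c.IsCycle ∧
    (∀ x ∈ S, x ∈ c.support) ∧ (∀ x ∈ A, x ∉ c.support)

private lemma closed_mem_tail {V : Type*} {G : SimpleGraph V} {v : V}
    (c : G.Walk v v) (hc : ¬ c.Nil) : v ∈ c.support.tail := by
  cases c with
  | nil => exact absurd SimpleGraph.Walk.nil_nil hc
  | cons h p => simp only [SimpleGraph.Walk.support_cons, List.tail_cons]; exact p.end_mem_support

/-- Membership in rotated support, forward direction. -/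
private lemma mem_rotate_support {V : Type*} [DecidableEq V] {G : SimpleGraph V} {v u : V}
    {c : G.Walk v v} (h : u ∈ c.support) (hc : ¬ c.Nil) {x : V} (hx : x ∈ c.support) :
    x ∈ (c.rotate u h).support := by
  have hperm := SimpleGraph.Walk.support_rotate c u h
  rcases (SimpleGraph.Walk.mem_support_iff _).1 hx with rfl | hx'
  · exact List.mem_of_mem_tail (hperm.perm.mem_iff.2 (closed_mem_tail c hc))
  · exact List.mem_of_mem_tail (hperm.perm.mem_iff.2 hx')

private lemma rotate_support_subset {V : Type*} [DecidableEq V] {G : SimpleGraph V} {v u : V}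
    {c : G.Walk v v} (h : u ∈ c.support) {x : V} (hx : x ∈ (c.rotate u h).support) :
    x ∈ c.support := by
  have hperm := SimpleGraph.Walk.support_rotate c u h
  rcases (SimpleGraph.Walk.mem_support_iff _).1 hx with rfl | hx'
  · exact h
  · exact List.mem_of_mem_tail (hperm.perm.mem_iff.1 hx')

/-- From a cycle based at `u` containing `v`, extract a `u`-`v` walk inside the
cycle avoiding a given vertex `a ∉ {u, v}`. -/
private lemma cycle_split {V : Type*} [DecidableEq V] {G : SimpleGraph V} {u v a : V}
    {c : G.Walk u u} (hc : c.IsCycle) (hv : v ∈ c.support) (hau : a ≠ u) (hav : a ≠ v) :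
    ∃ w : G.Walk u v, (∀ x ∈ w.support, x ∈ c.support) ∧ a ∉ w.support := by
  set p := c.takeUntil v hv with hp
  set q := c.dropUntil v hv with hq
  have hspec : p.append q = c := c.take_spec hv
  have hnodup : c.support.tail.Nodup := hc.support_nodup
  have htail : c.support.tail = p.support.tail ++ q.support.tail := by
    rw [← hspec, SimpleGraph.Walk.tail_support_append]
  rw [htail] at hnodup
  have hdisj := List.disjoint_of_nodup_append hnodup
  by_cases hA : a ∈ p.support
  · -- then a ∉ q.support
    refine ⟨q.reverse, ?_, ?_⟩
    · intro x hx
      rw [SimpleGraph.Walk.support_reverse] at hx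
      exact c.support_dropUntil_subset hv (List.mem_reverse.1 hx)
    · rw [SimpleGraph.Walk.support_reverse, List.mem_reverse]
      intro haq
      have ha1 : a ∈ p.support.tail := by
        rcases (SimpleGraph.Walk.mem_support_iff _).1 hA with rfl | h'
        · exact absurd rfl hau
        · exact h'
      have ha2 : a ∈ q.support.tail := by
        rcases (SimpleGraph.Walk.mem_support_iff _).1 haq with rfl | h'
        · exact absurd rfl hav
        · exact h'
      exact hdisj ha1 ha2
  · exact ⟨p, fun x hx => c.support_takeUntil_subset hv hx, hA⟩

/-- A walk staying in a set gives reachability in the induced graph. -/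
private lemma reach_of_walk {V : Type*} {G : SimpleGraph V} {s : Set V} :
    ∀ {u v : V} (w : G.Walk u v), (∀ x ∈ w.support, x ∈ s) →
      ∀ (hu : u ∈ s) (hv : v ∈ s), (G.induce s).Reachable ⟨u, hu⟩ ⟨v, hv⟩ := by
  intro u v w
  induction w with
  | nil => intro _ hu hv; rfl
  | cons h p ih =>
    rename_i x y z
    intro hs hu hv
    have hb : y ∈ s := hs y (by simp [SimpleGraph.Walk.support_cons])
    have hadj : (G.induce s).Adj ⟨x, hu⟩ ⟨y, hb⟩ := h
    exact hadj.reachable.trans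
      (ih (fun t ht => hs t (by simp [SimpleGraph.Walk.support_cons, ht])) hb hv)

/-- If `G` (with at least 4 vertices) satisfies property `C(3,1)`, then `G`
is 3-connected. -/
theorem C31_implies_threeConnected {V : Type*} [Fintype V] [DecidableEq V]
    (G : SimpleGraph V) (hcard : 4 ≤ Fintype.card V)
    (hC31 : ∀ x₁ x₂ x₃ z : V, x₁ ≠ x₂ → x₁ ≠ x₃ → x₂ ≠ x₃ →
      z ≠ x₁ → z ≠ x₂ → z ≠ x₃ → CycleThrough G {x₁, x₂, x₃} {z}) :
    ∀ X : Finset V, X.card ≤ 2 → (G.induce ((↑X : Set V)ᶜ)).Connected := by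
  intro X hX
  have hne : ∃ v : V, v ∉ X := by
    by_contra h
    push_neg at h
    have : Finset.univ ⊆ X := fun v _ => h v
    have := Finset.card_le_card this
    simp [Finset.card_univ] at this
    omega
  obtain ⟨v0, hv0⟩ := hne
  rw [SimpleGraph.connected_iff]
  refine ⟨?_, ⟨⟨v0, by simpa using hv0⟩⟩⟩
  · -- preconnected
    rintro ⟨u, hu⟩ ⟨v, hv⟩
    have hu' : u ∉ X := hu
    have hv' : v ∉ X := hv
    by_cases huv : u = v
    · subst huv; rfl
    -- extend X to a 2-set Y disjoint from {u, v}
    have hXsub : X ⊆ Finset.univ \ {u, v} := by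
      intro x hx
      simp only [Finset.mem_sdiff, Finset.mem_univ, Finset.mem_insert,
        Finset.mem_singleton, true_and]
      rintro (rfl | rfl) <;> [exact hu' hx; exact hv' hx]
    have hcard2 : 2 ≤ (Finset.univ \ ({u, v} : Finset V)).card := by
      have h1 : ({u, v} : Finset V).card ≤ 2 := Finset.card_insert_le _ _ |>.trans (by simp)
      have := Finset.card_sdiff_of_subset (Finset.subset_univ ({u, v} : Finset V))
      rw [this, Finset.card_univ]
      omega
    obtain ⟨Y, hXY, hYsub, hYcard⟩ := Finset.exists_subsuperset_card_eq hXsub hX hcard2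
    obtain ⟨a, b, hab, hYab⟩ := Finset.card_eq_two.1 hYcard
    have haY : a ∈ Y := by simp [hYab]
    have hbY : b ∈ Y := by simp [hYab]
    have hauv : a ≠ u ∧ a ≠ v := by
      have := hYsub haY
      simp only [Finset.mem_sdiff, Finset.mem_insert, Finset.mem_singleton] at this
      push_neg at this
      exact this.2
    have hbuv : b ≠ u ∧ b ≠ v := by
      have := hYsub hbY
      simp only [Finset.mem_sdiff, Finset.mem_insert, Finset.mem_singleton] at this
      push_neg at this
      exact this.2
    -- pick x₃ ∉ {u, v, b}
    have hx3 : ∃ x₃ : V, x₃ ∉ ({u, v, b} : Finset V) := by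
      by_contra h
      push_neg at h
      have : Finset.univ ⊆ ({u, v, b} : Finset V) := fun x _ => h x
      have h1 := Finset.card_le_card this
      have h2 : ({u, v, b} : Finset V).card ≤ 3 := by
        have h3 := Finset.card_insert_le u ({v, b} : Finset V)
        have h4 := Finset.card_insert_le v ({b} : Finset V)
        simp only [Finset.card_singleton] at h3 h4
        omega
      rw [Finset.card_univ] at h1
      omega
    obtain ⟨x₃, hx₃⟩ := hx3
    simp only [Finset.mem_insert, Finset.mem_singleton] at hx₃
    push_neg at hx₃
    obtain ⟨hx3u, hx3v, hx3b⟩ := hx₃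
    obtain ⟨w0, c, hcyc, hmem, havoid⟩ :=
      hC31 u v x₃ b huv (Ne.symm hx3u) (Ne.symm hx3v) hbuv.1 hbuv.2 (Ne.symm hx3b)
    have huc : u ∈ c.support := hmem u (by simp)
    have hvc : v ∈ c.support := hmem v (by simp)
    have hb' : b ∉ c.support := havoid b (by simp)
    set c' := c.rotate u huc with hc'
    have hcyc' : c'.IsCycle := hcyc.rotate huc
    have hv'' : v ∈ c'.support := mem_rotate_support huc hcyc.not_nil hvc
    obtain ⟨w, hwsub, haw⟩ := cycle_split hcyc' hv'' hauv.1 hauv.2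
    have hws : ∀ x ∈ w.support, x ∈ ((↑X : Set V)ᶜ : Set V) := by
      intro x hx
      simp only [Set.mem_compl_iff, Finset.mem_coe]
      intro hxX
      have hxY : x ∈ Y := hXY hxX
      rw [hYab] at hxY
      simp only [Finset.mem_insert, Finset.mem_singleton] at hxY
      rcases hxY with rfl | rfl
      · exact haw hx
      · exact hb' (rotate_support_subset huc (hwsub x hx))
    exact reach_of_walk w hws hu hv
end
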